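/- Fix odd integers q₁,...,q₅ with q₂,q₃,q₄ > 0, q₅ < 0, and q₁+q₅ < 0, and set q_m = max{q₂,q₃,q₄}. Let B ∈ V, and let h₀ ∈ Sp2 be any element whose second column has first four entries equal to conj(s₅(B))/|s₅(B)|. Then Σ_{ℓ=1}^5 (|(Bh₀)_{ℓ2}|² + |(Bh₀)_{ℓ4}|²) q_ℓ < 0. -/

import Mathlib

open Finset

noncomputable section

/-- SU(5): 5×5 special unitary complex matrices. -/
def SU5 : Set (Matrix (Fin 5) (Fin 5) ℂ) :=
  {A | A * A.conjTranspose = 1 ∧ A.det = 1}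

/-- The image of the embedding Sp(2) ↪ SU(5). -/
def Sp2 : Set (Matrix (Fin 5) (Fin 5) ℂ) :=
  {h | h ∈ SU5 ∧
    (∀ i : Fin 5, h i 4 = if i = 4 then 1 else 0) ∧
    (∀ i : Fin 5, h 4 i = if i = 4 then 1 else 0) ∧
    (∀ i j : Fin 5, i < 2 → j < 2 →
      h (i + 2) (j + 2) = (starRingEnd ℂ) (h i j) ∧
      h (i + 2) j = -(starRingEnd ℂ) (h i (j + 2)))}

/-- q_m = max{q₂,q₃,q₄} (0-indexed: entries 1,2,3). -/
def qm (q : Fin 5 → ℤ) : ℤ := max (q 1) (max (q 2) (q 3))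

/-- Squared norm of the first four entries of row `i` of `B`. -/
def rowNormSq (B : Matrix (Fin 5) (Fin 5) ℂ) (i : Fin 5) : ℝ :=
  ∑ j : Fin 4, ‖B i j.castSucc‖ ^ 2

/-- The open set V ⊆ SU(5). -/
def V (q : Fin 5 → ℤ) : Set (Matrix (Fin 5) (Fin 5) ℂ) :=
  {B | B ∈ SU5 ∧
    (∀ i j : Fin 5, (i, j) ∉ ({(0,0),(1,1),(2,3),(3,4),(4,2)} : Set (Fin 5 × Fin 5)) →
      ‖B i j‖ < 1 / (16 * Real.sqrt (qm q))) ∧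
    7 / 8 < rowNormSq B 4 ∧
    Real.sqrt (rowNormSq B 0) < Real.sqrt (rowNormSq B 4) ∧
    0 < ∑ ℓ : Fin 5, (‖B ℓ 1‖ ^ 2 + ‖B ℓ 3‖ ^ 2) * (q ℓ : ℝ)}

set_option maxHeartbeats 2000000 in
private lemma bessel_pair (u v x : EuclideanSpace ℂ (Fin 4))
    (hu : ∑ k : Fin 4, (starRingEnd ℂ) (u k) * u k = 1)
    (hv : ∑ k : Fin 4, (starRingEnd ℂ) (v k) * v k = 1)
    (huv : ∑ k : Fin 4, (starRingEnd ℂ) (u k) * v k = 0) :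
    ‖∑ k : Fin 4, (starRingEnd ℂ) (u k) * x k‖ ^ 2 +
    ‖∑ k : Fin 4, (starRingEnd ℂ) (v k) * x k‖ ^ 2 ≤
    ∑ k : Fin 4, ‖x k‖ ^ 2 := by
  have hip : ∀ a b : EuclideanSpace ℂ (Fin 4),
      @inner ℂ _ _ a b = ∑ k : Fin 4, (starRingEnd ℂ) (a k) * b k := by
    intro a b; rw [PiLp.inner_apply]; simp [RCLike.inner_apply, mul_comm]
  set w : Bool → EuclideanSpace ℂ (Fin 4) := fun b => if b then u else v with hw
  have h1 : @inner ℂ _ _ u u = 1 := by rw [hip]; exact hu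
  have h2 : @inner ℂ _ _ v v = 1 := by rw [hip]; exact hv
  have h3 : @inner ℂ _ _ u v = 0 := by rw [hip]; exact huv
  have h4 : @inner ℂ _ _ v u = 0 := by rw [← inner_conj_symm, h3, map_zero]
  have hn1 : ‖u‖ = 1 := by rw [norm_eq_sqrt_re_inner (𝕜 := ℂ), h1]; simp
  have hn2 : ‖v‖ = 1 := by rw [norm_eq_sqrt_re_inner (𝕜 := ℂ), h2]; simp
  have hortho : Orthonormal ℂ w := by
    rw [orthonormal_iff_ite]
    intro i j
    cases i <;> cases j <;> simp [hw, h1, h2, h3, h4, hn1, hn2]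
  have hb := hortho.sum_inner_products_le (𝕜 := ℂ) x (s := Finset.univ)
  rw [Fintype.sum_bool] at hb
  simp only [hw, if_true, if_false, Bool.false_eq_true] at hb
  rw [hip, hip] at hb
  have hx : ‖x‖ ^ 2 = ∑ k : Fin 4, ‖x k‖ ^ 2 := by
    rw [EuclideanSpace.norm_eq, Real.sq_sqrt (by positivity)]
  calc ‖∑ k : Fin 4, (starRingEnd ℂ) (u k) * x k‖ ^ 2 +
      ‖∑ k : Fin 4, (starRingEnd ℂ) (v k) * x k‖ ^ 2
      = ‖∑ k : Fin 4, (starRingEnd ℂ) (u k) * x k‖ ^ 2 +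
        ‖∑ k : Fin 4, (starRingEnd ℂ) (v k) * x k‖ ^ 2 := by
        rfl
    _ ≤ ‖x‖ ^ 2 := by
        refine le_trans (le_of_eq ?_) hb
        ring
    _ = _ := hx

set_option maxHeartbeats 8000000 in
theorem stmt13 (q : Fin 5 → ℤ) (hodd : ∀ i, Odd (q i))
    (h2 : 0 < q 1) (h3 : 0 < q 2) (h4 : 0 < q 3)
    (h5 : q 4 < 0) (h15 : q 0 + q 4 < 0)
    (B : Matrix (Fin 5) (Fin 5) ℂ) (hB : B ∈ V q)
    (h₀ : Matrix (Fin 5) (Fin 5) ℂ) (hh₀ : h₀ ∈ Sp2)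
    (hcol : ∀ i : Fin 4, h₀ i.castSucc 1 =
      (starRingEnd ℂ) (B 4 i.castSucc) / (Real.sqrt (rowNormSq B 4) : ℂ)) :
    ∑ ℓ : Fin 5, (‖(B * h₀) ℓ 1‖ ^ 2 + ‖(B * h₀) ℓ 3‖ ^ 2)
      * (q ℓ : ℝ) < 0 := by
  obtain ⟨⟨hU, hdet⟩, hsmall, h78, h04, hpos⟩ := hB
  obtain ⟨hSU, hc4, hr4, hsymp⟩ := hh₀
  set r := Real.sqrt (rowNormSq B 4) with hrdef
  -- orthonormality of rows
  have horth : ∀ i j : Fin 5, ∑ k : Fin 5, B i k * (starRingEnd ℂ) (B j k)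
      = if i = j then 1 else 0 := by
    intro i j
    have h := congrFun (congrFun hU i) j
    simpa [Matrix.mul_apply, Matrix.conjTranspose_apply, Matrix.one_apply] using h
  have habs2 : ∀ z : ℂ, z * (starRingEnd ℂ) z = ((‖z‖ ^ 2 : ℝ) : ℂ) := by
    intro z
    rw [Complex.mul_conj]
    norm_cast
    exact (Complex.sq_norm z).symm
  have hrowsum : ∀ i, ∑ k : Fin 5, ‖B i k‖ ^ 2 = 1 := by
    intro i
    have h := horth i i
    rw [if_pos rfl, Finset.sum_congr rfl (fun k _ => habs2 (B i k))] at h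
    exact_mod_cast h
  have habs1 : ∀ i k, ‖B i k‖ ≤ 1 := by
    intro i k
    have h := hrowsum i
    have h1 : ‖B i k‖ ^ 2 ≤ 1 := by
      rw [← h]
      exact Finset.single_le_sum (f := fun k => ‖B i k‖ ^ 2)
        (fun _ _ => by positivity) (mem_univ k)
    nlinarith [norm_nonneg (B i k)]
  -- basic facts about r
  have hrnn : 0 ≤ rowNormSq B 4 := by unfold rowNormSq; positivity
  have hr2 : r ^ 2 = rowNormSq B 4 := Real.sq_sqrt hrnn
  have hrpos : 0 < r := Real.sqrt_pos.mpr (by linarith)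
  have rows4 : rowNormSq B 4 = ‖B 4 0‖ ^ 2 + ‖B 4 1‖ ^ 2
      + ‖B 4 2‖ ^ 2 + ‖B 4 3‖ ^ 2 := by
    unfold rowNormSq
    rw [Fin.sum_univ_four]
    rfl
  have rows0 : rowNormSq B 0 = ‖B 0 0‖ ^ 2 + ‖B 0 1‖ ^ 2
      + ‖B 0 2‖ ^ 2 + ‖B 0 3‖ ^ 2 := by
    unfold rowNormSq
    rw [Fin.sum_univ_four]
    rfl
  have hr1 : r ^ 2 ≤ 1 := by
    have h := hrowsum 4
    rw [Fin.sum_univ_five] at h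
    rw [hr2, rows4]
    nlinarith [sq_nonneg (‖B 4 4‖)]
  have hrC : (r : ℂ) ≠ 0 := Complex.ofReal_ne_zero.mpr hrpos.ne'
  -- entries of h₀
  have hc0' : h₀ 0 1 = (starRingEnd ℂ) (B 4 0) / (r : ℂ) := hcol 0
  have hc1' : h₀ 1 1 = (starRingEnd ℂ) (B 4 1) / (r : ℂ) := hcol 1
  have hc2' : h₀ 2 1 = (starRingEnd ℂ) (B 4 2) / (r : ℂ) := hcol 2
  have hc3' : h₀ 3 1 = (starRingEnd ℂ) (B 4 3) / (r : ℂ) := hcol 3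
  have h41 : h₀ 4 1 = 0 := by simpa using hr4 1
  have h43 : h₀ 4 3 = 0 := by simpa using hr4 3
  have h23' : h₀ 2 3 = B 4 0 / (r : ℂ) := by
    have h := (hsymp 0 1 (by decide) (by decide)).1
    rw [show ((0:Fin 5)+2) = (2:Fin 5) from rfl, show ((1:Fin 5)+2) = (3:Fin 5) from rfl] at h
    rw [h, hc0', map_div₀, Complex.conj_conj, Complex.conj_ofReal]
  have h33' : h₀ 3 3 = B 4 1 / (r : ℂ) := by
    have h := (hsymp 1 1 (by decide) (by decide)).1
    rw [show ((1:Fin 5)+2) = (3:Fin 5) from rfl] at h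
    rw [h, hc1', map_div₀, Complex.conj_conj, Complex.conj_ofReal]
  have h03' : h₀ 0 3 = -(B 4 2) / (r : ℂ) := by
    have h := (hsymp 0 1 (by decide) (by decide)).2
    rw [show ((0:Fin 5)+2) = (2:Fin 5) from rfl, show ((1:Fin 5)+2) = (3:Fin 5) from rfl] at h
    have h' := congrArg (starRingEnd ℂ) h
    rw [map_neg, Complex.conj_conj, hc2', map_div₀, Complex.conj_conj, Complex.conj_ofReal] at h'
    linear_combination h'
  have h13' : h₀ 1 3 = -(B 4 3) / (r : ℂ) := by
    have h := (hsymp 1 1 (by decide) (by decide)).2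
    rw [show ((1:Fin 5)+2) = (3:Fin 5) from rfl] at h
    have h' := congrArg (starRingEnd ℂ) h
    rw [map_neg, Complex.conj_conj, hc3', map_div₀, Complex.conj_conj, Complex.conj_ofReal] at h'
    linear_combination h'
  -- formulas for columns 1 and 3 of B * h₀
  have hP : ∀ ℓ, (B * h₀) ℓ 1 = (B ℓ 0 * (starRingEnd ℂ) (B 4 0) + B ℓ 1 * (starRingEnd ℂ) (B 4 1)
      + B ℓ 2 * (starRingEnd ℂ) (B 4 2) + B ℓ 3 * (starRingEnd ℂ) (B 4 3)) / (r : ℂ) := by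
    intro ℓ
    rw [Matrix.mul_apply, Fin.sum_univ_five, hc0', hc1', hc2', hc3', h41]
    ring
  have hQ : ∀ ℓ, (B * h₀) ℓ 3 = (-(B ℓ 0 * B 4 2) - B ℓ 1 * B 4 3 + B ℓ 2 * B 4 0
      + B ℓ 3 * B 4 1) / (r : ℂ) := by
    intro ℓ
    rw [Matrix.mul_apply, Fin.sum_univ_five, h03', h13', h23', h33', h43]
    ring
  have horth5 : ∀ i j : Fin 5, B i 0 * (starRingEnd ℂ) (B j 0) + B i 1 * (starRingEnd ℂ) (B j 1)
      + B i 2 * (starRingEnd ℂ) (B j 2) + B i 3 * (starRingEnd ℂ) (B j 3)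
      + B i 4 * (starRingEnd ℂ) (B j 4) = if i = j then 1 else 0 := by
    intro i j
    have h := horth i j
    rwa [Fin.sum_univ_five] at h
  have hPn : ∀ ℓ : Fin 5, ℓ ≠ 4 → (B * h₀) ℓ 1 = -(B ℓ 4 * (starRingEnd ℂ) (B 4 4)) / (r : ℂ) := by
    intro ℓ hℓ
    have h := horth5 ℓ 4
    rw [if_neg hℓ] at h
    rw [hP ℓ]
    linear_combination h / (r : ℂ)
  have hnum : B 4 0 * (starRingEnd ℂ) (B 4 0) + B 4 1 * (starRingEnd ℂ) (B 4 1)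
      + B 4 2 * (starRingEnd ℂ) (B 4 2) + B 4 3 * (starRingEnd ℂ) (B 4 3) = ((r : ℂ)) ^ 2 := by
    rw [habs2, habs2, habs2, habs2]
    have h := hr2.trans rows4
    norm_cast
    linarith
  have hP4 : (B * h₀) 4 1 = (r : ℂ) := by
    rw [hP 4, hnum]
    field_simp
  have hQ4 : (B * h₀) 4 3 = 0 := by
    rw [hQ 4, div_eq_zero_iff]
    left
    ring
  -- d facts
  set d : ℝ := 1 / (16 * Real.sqrt (qm q)) with hddef
  have hqm1 : (1:ℝ) ≤ (qm q : ℝ) := by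
    have h : (1:ℤ) ≤ qm q := le_trans h2 (le_max_left _ _)
    exact_mod_cast h
  have hsqm : 1 ≤ Real.sqrt ((qm q : ℝ)) := by
    rw [show (1:ℝ) = Real.sqrt 1 from (Real.sqrt_one).symm]
    exact Real.sqrt_le_sqrt (by linarith)
  have hd0 : 0 < d := by rw [hddef]; positivity
  have hd16 : d ≤ 1/16 := by
    rw [hddef]
    have h16 : (16:ℝ) ≤ 16 * Real.sqrt ((qm q : ℝ)) := by linarith
    exact one_div_le_one_div_of_le (by norm_num) h16
  have hd1 : d ≤ 1 := le_trans hd16 (by norm_num)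
  have hqm0 : (qm q : ℝ) ≠ 0 := by linarith
  have hqmd : (qm q : ℝ) * d ^ 2 = 1 / 256 := by
    rw [hddef, div_pow, mul_pow, Real.sq_sqrt (by linarith : (0:ℝ) ≤ (qm q : ℝ))]
    field_simp
    ring
  have hsm : ∀ i j : Fin 5, (i, j) ∉ ({(0,0),(1,1),(2,3),(3,4),(4,2)} : Set (Fin 5 × Fin 5)) →
      ‖B i j‖ ≤ d := fun i j h => (hsmall i j h).le
  -- abs formulas
  have absP : ∀ ℓ : Fin 5, ℓ ≠ 4 →
      ‖(B * h₀) ℓ 1‖ = ‖B ℓ 4‖ * ‖B 4 4‖ / r := by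
    intro ℓ h
    rw [hPn ℓ h]
    simp [norm_div, Complex.norm_conj, Complex.norm_of_nonneg hrpos.le, norm_mul, norm_neg, abs_of_pos hrpos]
  have habs_add4 : ∀ x1 x2 x3 x4 : ℂ, ‖x1 + x2 + x3 + x4‖ ≤
      ‖x1‖ + ‖x2‖ + ‖x3‖ + ‖x4‖ := by
    intro x1 x2 x3 x4
    calc ‖x1 + x2 + x3 + x4‖ ≤ ‖x1 + x2 + x3‖ + ‖x4‖ :=
          norm_add_le _ _
      _ ≤ (‖x1 + x2‖ + ‖x3‖) + ‖x4‖ :=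
          add_le_add_left (norm_add_le _ _) _
      _ ≤ ((‖x1‖ + ‖x2‖) + ‖x3‖) + ‖x4‖ :=
          add_le_add_left (add_le_add_left (norm_add_le _ _) _) _
  have absQ : ∀ ℓ : Fin 5, ‖(B * h₀) ℓ 3‖ ≤ (‖B ℓ 0‖ * ‖B 4 2‖
      + ‖B ℓ 1‖ * ‖B 4 3‖ + ‖B ℓ 2‖ * ‖B 4 0‖
      + ‖B ℓ 3‖ * ‖B 4 1‖) / r := by
    intro ℓ
    rw [hQ ℓ, norm_div, Complex.norm_of_nonneg hrpos.le]
    refine (div_le_div_iff_of_pos_right hrpos).mpr ?_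
    have h := habs_add4 (-(B ℓ 0 * B 4 2)) (-(B ℓ 1 * B 4 3)) (B ℓ 2 * B 4 0) (B ℓ 3 * B 4 1)
    rw [show -(B ℓ 0 * B 4 2) - B ℓ 1 * B 4 3 + B ℓ 2 * B 4 0 + B ℓ 3 * B 4 1
        = -(B ℓ 0 * B 4 2) + -(B ℓ 1 * B 4 3) + B ℓ 2 * B 4 0 + B ℓ 3 * B 4 1 from by ring]
    simpa [norm_mul, norm_neg] using h
  have hmulb : ∀ a b e : ℝ, 0 ≤ a → 0 ≤ b → a ≤ e → b ≤ 1 → a * b ≤ e := by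
    intro a b e ha hb hae hb1
    exact le_trans (mul_le_of_le_one_right ha hb1) hae
  have h78' : (7:ℝ)/8 < r ^ 2 := by rw [hr2]; exact h78
  -- generic middle-term bound
  have key : ∀ ℓ : Fin 5, ℓ ≠ 4 → 0 ≤ (q ℓ : ℝ) → (q ℓ : ℝ) ≤ (qm q : ℝ) →
      ‖B ℓ 4‖ * ‖B 4 4‖ ≤ d →
      (‖B ℓ 0‖ * ‖B 4 2‖ + ‖B ℓ 1‖ * ‖B 4 3‖
        + ‖B ℓ 2‖ * ‖B 4 0‖ + ‖B ℓ 3‖ * ‖B 4 1‖)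
        ≤ 4 * d →
      (‖(B * h₀) ℓ 1‖ ^ 2 + ‖(B * h₀) ℓ 3‖ ^ 2) * (q ℓ : ℝ) ≤ 17 / 224 := by
    intro ℓ hℓ hq0 hqle hPb hQb
    have e1 : ‖(B * h₀) ℓ 1‖ ≤ d / r := by
      rw [absP ℓ hℓ]
      exact (div_le_div_iff_of_pos_right hrpos).mpr hPb
    have e2 : ‖(B * h₀) ℓ 3‖ ≤ 4 * d / r :=
      (absQ ℓ).trans ((div_le_div_iff_of_pos_right hrpos).mpr hQb)
    have p1 : ‖(B * h₀) ℓ 1‖ ^ 2 ≤ (d / r) ^ 2 :=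
      pow_le_pow_left₀ (norm_nonneg _) e1 2
    have p2 : ‖(B * h₀) ℓ 3‖ ^ 2 ≤ (4 * d / r) ^ 2 :=
      pow_le_pow_left₀ (norm_nonneg _) e2 2
    have hsum : ‖(B * h₀) ℓ 1‖ ^ 2 + ‖(B * h₀) ℓ 3‖ ^ 2
        ≤ 17 * d ^ 2 / r ^ 2 := by
      have heq : (d / r) ^ 2 + (4 * d / r) ^ 2 = 17 * d ^ 2 / r ^ 2 := by
        field_simp
        ring
      linarith
    have hfrac : 17 * d ^ 2 / r ^ 2 ≤ 17 * d ^ 2 * (8 / 7) := by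
      rw [div_le_iff₀ (by linarith only [h78'] : (0:ℝ) < r ^ 2)]
      have hx : 17 * d ^ 2 * (8 / 7) * (7 / 8) ≤ 17 * d ^ 2 * (8 / 7) * r ^ 2 :=
        mul_le_mul_of_nonneg_left h78'.le (by positivity)
      linarith only [hx]
    calc (‖(B * h₀) ℓ 1‖ ^ 2 + ‖(B * h₀) ℓ 3‖ ^ 2) * (q ℓ : ℝ)
        ≤ (17 * d ^ 2 * (8 / 7)) * (qm q : ℝ) := by
          apply mul_le_mul (hsum.trans hfrac) hqle hq0 (by positivity)
      _ = (17 * (8/7)) * ((qm q : ℝ) * d ^ 2) := by ring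
      _ = 17 / 224 := by rw [hqmd]; norm_num
  have nm : ∀ i j : Fin 5, (i,j) ≠ ((0:Fin 5),(0:Fin 5)) → (i,j) ≠ (1,1) → (i,j) ≠ (2,3) →
      (i,j) ≠ (3,4) → (i,j) ≠ (4,2) → ‖B i j‖ ≤ d := by
    intro i j n1 n2 n3 n4 n5
    apply hsm
    simp only [Set.mem_insert_iff, Set.mem_singleton_iff]
    push_neg
    exact ⟨n1, n2, n3, n4, n5⟩
  have anneg : ∀ i j : Fin 5, 0 ≤ ‖B i j‖ := fun i j => norm_nonneg _
  have t1 : (‖(B * h₀) 1 1‖ ^ 2 + ‖(B * h₀) 1 3‖ ^ 2) * (q 1 : ℝ)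
      ≤ 17/224 := by
    apply key 1 (by decide) (by exact_mod_cast h2.le)
      (by exact_mod_cast le_max_left (q 1) (max (q 2) (q 3)))
    · exact hmulb _ _ _ (anneg _ _) (anneg _ _)
        (nm 1 4 (by decide) (by decide) (by decide) (by decide) (by decide)) (habs1 4 4)
    · have b1 : ‖B 1 0‖ * ‖B 4 2‖ ≤ d := hmulb _ _ _ (anneg _ _) (anneg _ _)
        (nm 1 0 (by decide) (by decide) (by decide) (by decide) (by decide)) (habs1 4 2)
      have b2 : ‖B 1 1‖ * ‖B 4 3‖ ≤ d := by
        rw [mul_comm]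
        exact hmulb _ _ _ (anneg _ _) (anneg _ _)
          (nm 4 3 (by decide) (by decide) (by decide) (by decide) (by decide)) (habs1 1 1)
      have b3 : ‖B 1 2‖ * ‖B 4 0‖ ≤ d := hmulb _ _ _ (anneg _ _) (anneg _ _)
        (nm 1 2 (by decide) (by decide) (by decide) (by decide) (by decide)) (habs1 4 0)
      have b4 : ‖B 1 3‖ * ‖B 4 1‖ ≤ d := hmulb _ _ _ (anneg _ _) (anneg _ _)
        (nm 1 3 (by decide) (by decide) (by decide) (by decide) (by decide)) (habs1 4 1)
      linarith only [b1, b2, b3, b4, hd0]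
  have t2 : (‖(B * h₀) 2 1‖ ^ 2 + ‖(B * h₀) 2 3‖ ^ 2) * (q 2 : ℝ)
      ≤ 17/224 := by
    apply key 2 (by decide) (by exact_mod_cast h3.le)
      (by exact_mod_cast le_trans (le_max_left (q 2) (q 3)) (le_max_right (q 1) _))
    · exact hmulb _ _ _ (anneg _ _) (anneg _ _)
        (nm 2 4 (by decide) (by decide) (by decide) (by decide) (by decide)) (habs1 4 4)
    · have b1 : ‖B 2 0‖ * ‖B 4 2‖ ≤ d := hmulb _ _ _ (anneg _ _) (anneg _ _)
        (nm 2 0 (by decide) (by decide) (by decide) (by decide) (by decide)) (habs1 4 2)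
      have b2 : ‖B 2 1‖ * ‖B 4 3‖ ≤ d := hmulb _ _ _ (anneg _ _) (anneg _ _)
        (nm 2 1 (by decide) (by decide) (by decide) (by decide) (by decide)) (habs1 4 3)
      have b3 : ‖B 2 2‖ * ‖B 4 0‖ ≤ d := hmulb _ _ _ (anneg _ _) (anneg _ _)
        (nm 2 2 (by decide) (by decide) (by decide) (by decide) (by decide)) (habs1 4 0)
      have b4 : ‖B 2 3‖ * ‖B 4 1‖ ≤ d := by
        rw [mul_comm]
        exact hmulb _ _ _ (anneg _ _) (anneg _ _)
          (nm 4 1 (by decide) (by decide) (by decide) (by decide) (by decide)) (habs1 2 3)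
      linarith only [b1, b2, b3, b4, hd0]
  have t3 : (‖(B * h₀) 3 1‖ ^ 2 + ‖(B * h₀) 3 3‖ ^ 2) * (q 3 : ℝ)
      ≤ 17/224 := by
    apply key 3 (by decide) (by exact_mod_cast h4.le)
      (by exact_mod_cast le_trans (le_max_right (q 2) (q 3)) (le_max_right (q 1) _))
    · rw [mul_comm]
      exact hmulb _ _ _ (anneg _ _) (anneg _ _)
        (nm 4 4 (by decide) (by decide) (by decide) (by decide) (by decide)) (habs1 3 4)
    · have b1 : ‖B 3 0‖ * ‖B 4 2‖ ≤ d := hmulb _ _ _ (anneg _ _) (anneg _ _)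
        (nm 3 0 (by decide) (by decide) (by decide) (by decide) (by decide)) (habs1 4 2)
      have b2 : ‖B 3 1‖ * ‖B 4 3‖ ≤ d := hmulb _ _ _ (anneg _ _) (anneg _ _)
        (nm 3 1 (by decide) (by decide) (by decide) (by decide) (by decide)) (habs1 4 3)
      have b3 : ‖B 3 2‖ * ‖B 4 0‖ ≤ d := hmulb _ _ _ (anneg _ _) (anneg _ _)
        (nm 3 2 (by decide) (by decide) (by decide) (by decide) (by decide)) (habs1 4 0)
      have b4 : ‖B 3 3‖ * ‖B 4 1‖ ≤ d := hmulb _ _ _ (anneg _ _) (anneg _ _)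
        (nm 3 3 (by decide) (by decide) (by decide) (by decide) (by decide)) (habs1 4 1)
      linarith only [b1, b2, b3, b4, hd0]
  -- Bessel inequality for row 0
  set u : EuclideanSpace ℂ (Fin 4) := WithLp.toLp 2 (fun k => B 4 k.castSucc / (r : ℂ)) with hudef
  set v : EuclideanSpace ℂ (Fin 4) :=
    WithLp.toLp 2 ![-(starRingEnd ℂ) (B 4 2) / (r : ℂ), -(starRingEnd ℂ) (B 4 3) / (r : ℂ),
      (starRingEnd ℂ) (B 4 0) / (r : ℂ), (starRingEnd ℂ) (B 4 1) / (r : ℂ)] with hvdef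
  set x : EuclideanSpace ℂ (Fin 4) := WithLp.toLp 2 (fun k => B 0 k.castSucc) with hxdef
  have hu0 : u 0 = B 4 0 / (r : ℂ) := rfl
  have hu1 : u 1 = B 4 1 / (r : ℂ) := rfl
  have hu2 : u 2 = B 4 2 / (r : ℂ) := rfl
  have hu3 : u 3 = B 4 3 / (r : ℂ) := rfl
  have hv0 : v 0 = -(starRingEnd ℂ) (B 4 2) / (r : ℂ) := rfl
  have hv1 : v 1 = -(starRingEnd ℂ) (B 4 3) / (r : ℂ) := rfl
  have hv2 : v 2 = (starRingEnd ℂ) (B 4 0) / (r : ℂ) := rfl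
  have hv3 : v 3 = (starRingEnd ℂ) (B 4 1) / (r : ℂ) := rfl
  have hx0 : x 0 = B 0 0 := rfl
  have hx1 : x 1 = B 0 1 := rfl
  have hx2 : x 2 = B 0 2 := rfl
  have hx3 : x 3 = B 0 3 := rfl
  have hu : ∑ k : Fin 4, (starRingEnd ℂ) (u k) * u k = 1 := by
    rw [Fin.sum_univ_four, hu0, hu1, hu2, hu3]
    simp only [map_div₀, Complex.conj_ofReal]
    field_simp
    linear_combination hnum
  have hv : ∑ k : Fin 4, (starRingEnd ℂ) (v k) * v k = 1 := by
    rw [Fin.sum_univ_four, hv0, hv1, hv2, hv3]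
    simp only [map_div₀, map_neg, Complex.conj_conj, Complex.conj_ofReal]
    field_simp
    linear_combination hnum
  have huv : ∑ k : Fin 4, (starRingEnd ℂ) (u k) * v k = 0 := by
    rw [Fin.sum_univ_four, hu0, hu1, hu2, hu3, hv0, hv1, hv2, hv3]
    simp only [map_div₀, map_neg, Complex.conj_conj, Complex.conj_ofReal]
    field_simp
    ring
  have eP : (B * h₀) 0 1 = ∑ k : Fin 4, (starRingEnd ℂ) (u k) * x k := by
    rw [Fin.sum_univ_four, hu0, hu1, hu2, hu3, hx0, hx1, hx2, hx3, hP 0]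
    simp only [map_div₀, Complex.conj_ofReal]
    ring
  have eQ : (B * h₀) 0 3 = ∑ k : Fin 4, (starRingEnd ℂ) (v k) * x k := by
    rw [Fin.sum_univ_four, hv0, hv1, hv2, hv3, hx0, hx1, hx2, hx3, hQ 0]
    simp only [map_div₀, map_neg, Complex.conj_conj, Complex.conj_ofReal]
    ring
  have ex : ∑ k : Fin 4, ‖x k‖ ^ 2 = rowNormSq B 0 := rfl
  have hbp := bessel_pair u v x hu hv huv
  rw [← eP, ← eQ, ex] at hbp
  have hs0lt : rowNormSq B 0 < r ^ 2 := by
    have h1 : 0 ≤ rowNormSq B 0 := by rw [rows0]; positivity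
    have h2 := mul_self_lt_mul_self (Real.sqrt_nonneg (rowNormSq B 0)) h04
    rw [Real.mul_self_sqrt h1] at h2
    rw [pow_two]
    exact h2
  have hq4' : (q 4 : ℝ) ≤ -1 := by exact_mod_cast (by omega : q 4 ≤ -1)
  have hq04' : (q 0 : ℝ) + (q 4 : ℝ) ≤ -1 := by
    have h : q 0 + q 4 ≤ -1 := by omega
    exact_mod_cast h
  have e41 : ‖(B * h₀) 4 1‖ ^ 2 = r ^ 2 := by
    rw [hP4, Complex.norm_of_nonneg hrpos.le]
  have e43 : ‖(B * h₀) 4 3‖ = 0 := by rw [hQ4, norm_zero]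
  have t04 : (‖(B * h₀) 0 1‖ ^ 2 + ‖(B * h₀) 0 3‖ ^ 2) * (q 0 : ℝ)
      + (‖(B * h₀) 4 1‖ ^ 2 + ‖(B * h₀) 4 3‖ ^ 2) * (q 4 : ℝ)
      ≤ -(7/8) := by
    rw [e41, e43]
    have hs0n : 0 ≤ ‖(B * h₀) 0 1‖ ^ 2 + ‖(B * h₀) 0 3‖ ^ 2 := by
      positivity
    have hs0r : ‖(B * h₀) 0 1‖ ^ 2 + ‖(B * h₀) 0 3‖ ^ 2 < r ^ 2 :=
      lt_of_le_of_lt hbp hs0lt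
    rcases le_or_gt (q 0 : ℝ) 0 with hq0 | hq0
    · have hA : (‖(B * h₀) 0 1‖ ^ 2 + ‖(B * h₀) 0 3‖ ^ 2) * (q 0 : ℝ)
          ≤ 0 := mul_nonpos_iff.mpr (Or.inl ⟨hs0n, hq0⟩)
      have hBq : r ^ 2 * (q 4 : ℝ) ≤ r ^ 2 * (-1) :=
        mul_le_mul_of_nonneg_left hq4' (sq_nonneg r)
      have h00 : ((0:ℝ)) ^ 2 = 0 := by norm_num
      rw [h00]
      linarith only [hA, hBq, h78']
    · have hft : (q 4 : ℝ) ≤ -1 - (q 0 : ℝ) := by linarith only [hq04']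
      have hA := mul_le_mul_of_nonneg_left hs0r.le hq0.le
      have hBq : r ^ 2 * (q 4 : ℝ) ≤ r ^ 2 * (-1 - (q 0 : ℝ)) :=
        mul_le_mul_of_nonneg_left hft (sq_nonneg r)
      have h00 : ((0:ℝ)) ^ 2 = 0 := by norm_num
      rw [h00]
      linarith only [hA, hBq, h78']
  rw [Fin.sum_univ_five]
  linarith only [t1, t2, t3, t04]
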